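/- A finite set ℒ = {L_1,...,L_r} of linear forms in ℂ[x_0,...,x_n] is a Hadamard set if and only if all the linear forms L_i have the same support (i.e., for every variable x_j, either x_j appears with nonzero coefficient in every L_i or in none of them). -/

import Mathlib

/-- A finite set ℒ = {L₁,…,L_r} of (nonzero) linear forms, given by their coefficient
vectors A i, is a Hadamard set (∃ a linear form L = Σ aⱼxⱼ and points Pᵢ with all
coordinates nonzero such that Lᵢ is proportional to Σⱼ (aⱼ/pⱼ(i))xⱼ) if and only if
all the Lᵢ have the same support. -/
theorem hadamard_set_iff_same_support (n r : ℕ) (A : Fin r → Fin (n + 1) → ℂ)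
    (hA : ∀ i, A i ≠ 0) :
    (∃ (a : Fin (n + 1) → ℂ) (P : Fin r → Fin (n + 1) → ℂ),
        (∀ i j, P i j ≠ 0) ∧
        ∀ i, ∃ c : ℂ, c ≠ 0 ∧ A i = fun j => c * (a j / P i j))
      ↔ (∀ i i' j, A i j ≠ 0 ↔ A i' j ≠ 0) := by
  constructor
  · rintro ⟨a, P, hP, h⟩ i i' j
    have key : ∀ k, A k j ≠ 0 ↔ a j ≠ 0 := by
      intro k
      obtain ⟨c, hc, hAk⟩ := h k
      rw [hAk]
      simp only [ne_eq, mul_eq_zero, div_eq_zero_iff, hc, hP k j, or_false, false_or]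
    rw [key i, key i']
  · intro hsupp
    rcases Nat.eq_zero_or_pos r with hr | hr
    · subst hr
      exact ⟨fun _ => 1, fun i => i.elim0, fun i => i.elim0, fun i => i.elim0⟩
    · have i0 : Fin r := ⟨0, hr⟩
      refine ⟨A i0, fun i j => if A i j = 0 then 1 else A i0 j / A i j, ?_, ?_⟩
      · intro i j
        by_cases h : A i j = 0
        · simp [h]
        · have h0 : A i0 j ≠ 0 := (hsupp i0 i j).mpr h
          simp [h, div_ne_zero h0 h]
      · intro i
        refine ⟨1, one_ne_zero, ?_⟩
        funext j
        by_cases h : A i j = 0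
        · have h0 : A i0 j = 0 := by
            by_contra h0
            exact (hsupp i i0 j).mpr h0 h
          simp [h, h0]
        · have h0 : A i0 j ≠ 0 := (hsupp i0 i j).mpr h
          simp only [h, if_false]
          field_simp [h, h0]
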